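/- Let G be a k-regular graph on v vertices with adjacency matrix eigenvalues k = θ₁ ≥ θ₂ ≥ … ≥ θ_v, and let A be a subset of vertices with a = |A|. Then the number of edges between A and its complement satisfies e(A, Aᶜ) ≥ (k − θ₂)·a·(v − a)/v. -/

import Mathlib

open Matrix

/-- Spectral edge-isoperimetric inequality: if `G` is `k`-regular on `v` vertices and
`θ₂` bounds the Rayleigh quotient of the adjacency matrix on the space orthogonal to
the all-ones vector (i.e. `θ₂` is at least the second-largest adjacency eigenvalue),
then `e(A, Aᶜ) ≥ (k − θ₂)·|A|·(v − |A|)/v`. -/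
theorem edge_isoperimetric_inequality {V : Type*} [Fintype V] [DecidableEq V]
    (G : SimpleGraph V) [DecidableRel G.Adj] (v k : ℕ)
    (hv : Fintype.card V = v) (hreg : G.IsRegularOfDegree k) (θ₂ : ℝ)
    (hθ : ∀ x : V → ℝ, (∑ u, x u) = 0 →
      x ⬝ᵥ (G.adjMatrix ℝ *ᵥ x) ≤ θ₂ * (x ⬝ᵥ x))
    (A : Finset V) :
    (((Finset.univ.filter
        (fun p : V × V => p.1 ∈ A ∧ p.2 ∉ A ∧ G.Adj p.1 p.2)).card : ℝ)) ≥
      ((k : ℝ) - θ₂) * A.card * ((v : ℝ) - A.card) / v := by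
  rcases Nat.eq_zero_or_pos v with h0 | hvpos
  · simp [h0]
  have hv0 : (0:ℝ) < (v:ℝ) := by exact_mod_cast hvpos
  set a : ℝ := (A.card : ℝ) with ha
  set χ : V → ℝ := fun u => if u ∈ A then 1 else 0 with hχ
  have hrow : ∀ u, ∑ w, G.adjMatrix ℝ u w = k := by
    intro u
    simp only [SimpleGraph.adjMatrix_apply, Finset.sum_ite_eq, Finset.sum_boole]
    rw [← SimpleGraph.neighborFinset_eq_filter, ← SimpleGraph.degree]
    exact_mod_cast congrArg Nat.cast (hreg u)
  have hcol : ∀ w, ∑ u, G.adjMatrix ℝ u w = k := by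
    intro w
    have : ∀ u, G.adjMatrix ℝ u w = G.adjMatrix ℝ w u := by
      intro u; rw [G.adjMatrix_apply, G.adjMatrix_apply]; simp [SimpleGraph.adj_comm]
    simp_rw [this]; exact hrow w
  have hχsum : ∑ u, χ u = a := by simp [hχ, ha]
  -- S1 : weighted count of adjacent ordered pairs inside A
  set S1 : ℝ := ∑ u, ∑ w, G.adjMatrix ℝ u w * χ u * χ w with hS1
  -- E = k*a - S1
  have hMχ : ∑ u, ∑ w, G.adjMatrix ℝ u w * χ u = k * a := by
    have : ∀ u, ∑ w, G.adjMatrix ℝ u w * χ u = k * χ u := by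
      intro u; rw [← Finset.sum_mul, hrow]
    simp_rw [this, ← Finset.mul_sum, hχsum]
  have hMχ' : ∑ u, ∑ w, G.adjMatrix ℝ u w * χ w = k * a := by
    rw [Finset.sum_comm]
    have : ∀ w, ∑ u, G.adjMatrix ℝ u w * χ w = k * χ w := by
      intro w; rw [← Finset.sum_mul, hcol]
    simp_rw [this, ← Finset.mul_sum, hχsum]
  have hMsum : ∑ u : V, ∑ w : V, G.adjMatrix ℝ u w = k * v := by
    simp_rw [hrow]
    simp [hv, mul_comm]
  have hE : ((Finset.univ.filter
      (fun p : V × V => p.1 ∈ A ∧ p.2 ∉ A ∧ G.Adj p.1 p.2)).card : ℝ)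
      = k * a - S1 := by
    have hcard : ((Finset.univ.filter
        (fun p : V × V => p.1 ∈ A ∧ p.2 ∉ A ∧ G.Adj p.1 p.2)).card : ℝ)
        = ∑ u : V, ∑ w : V,
          (if (u ∈ A ∧ w ∉ A ∧ G.Adj u w) then (1:ℝ) else 0) := by
      rw [Finset.card_filter]
      push_cast
      rw [Fintype.sum_prod_type]
    have hpt : ∀ u w : V,
        (if (u ∈ A ∧ w ∉ A ∧ G.Adj u w) then (1:ℝ) else 0)
        = G.adjMatrix ℝ u w * χ u - G.adjMatrix ℝ u w * χ u * χ w := by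
      intro u w
      by_cases h1 : u ∈ A <;> by_cases h2 : w ∈ A <;> by_cases h3 : G.Adj u w <;>
          simp only [SimpleGraph.adjMatrix_apply, hχ, h1, h2, h3, if_true, if_false,
            not_true, not_false_iff, true_and, false_and, and_true, and_false] <;>
        ring
    rw [hcard]
    simp_rw [hpt, Finset.sum_sub_distrib, hMχ]
    rw [hS1]
  -- the test vector
  set x : V → ℝ := fun u => χ u - a / v with hx
  have hx0 : ∑ u, x u = 0 := by
    rw [hx]
    simp only [Finset.sum_sub_distrib, hχsum, Finset.sum_const, Finset.card_univ, hv,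
      nsmul_eq_mul]
    field_simp
    simp
  have key := hθ x hx0
  -- compute x ⬝ᵥ x
  have hχsq : ∀ u, χ u * χ u = χ u := by
    intro u; by_cases h : u ∈ A <;> simp [hχ, h]
  have hnorm : x ⬝ᵥ x = a - a ^ 2 / v := by
    rw [dotProduct, hx]
    have expand : ∀ u, (χ u - a / v) * (χ u - a / v)
        = χ u * χ u - (2 * (a/v)) * χ u + (a/v) * (a/v) := by
      intro u; ring
    simp_rw [expand, hχsq, Finset.sum_add_distrib, Finset.sum_sub_distrib, hχsum,
      ← Finset.mul_sum, hχsum, Finset.sum_const, Finset.card_univ, hv, nsmul_eq_mul]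
    field_simp
    ring
  -- compute x ⬝ᵥ (M *ᵥ x)
  have hdot : x ⬝ᵥ (G.adjMatrix ℝ *ᵥ x) = S1 - 2 * (a/v) * (k*a) + (a/v)^2 * (k*v) := by
    rw [dotProduct]
    simp_rw [mulVec, dotProduct, Finset.mul_sum]
    have : ∀ u w, (x u) * (G.adjMatrix ℝ u w * x w)
        = G.adjMatrix ℝ u w * χ u * χ w - (a/v) * (G.adjMatrix ℝ u w * χ u)
          - (a/v) * (G.adjMatrix ℝ u w * χ w) + (a/v)^2 * G.adjMatrix ℝ u w := by
      intro u w; rw [hx]; ring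
    simp_rw [this, Finset.sum_add_distrib, Finset.sum_sub_distrib,
      ← Finset.mul_sum, hMχ, hMχ', hMsum, hS1]
    ring
  rw [hdot, hnorm] at key
  rw [ge_iff_le, hE, div_le_iff₀ hv0]
  have hvne : (v:ℝ) ≠ 0 := ne_of_gt hv0
  have key2 : S1 * v - k * a ^ 2 ≤ θ₂ * (a * v - a ^ 2) := by
    have h := mul_le_mul_of_nonneg_right key hv0.le
    calc S1 * v - k * a ^ 2
        = (S1 - 2 * (a/v) * (k*a) + (a/v)^2 * (k*v)) * v := by field_simp; ring
      _ ≤ θ₂ * (a - a ^ 2 / v) * v := h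
      _ = θ₂ * (a * v - a ^ 2) := by field_simp
  nlinarith [key2]
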